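/- In the homogeneous case (all firms share the same parameters 𝗉 = (α, λ̄, σ, β^C, β^S) and initial intensity λ₀), the limiting default rate F satisfies the closed integral equation F(t) = 1 - exp( -αλ̄ ∫_0^t b^𝗉(t-r) dr - β^C ∫_0^t F(r) (b^𝗉)'(t-r) dr - b^𝗉(t) λ₀ ), and this equation has a unique continuous solution F : [0,T] → [0,1]. -/

import Mathlib

open MeasureTheory

lemma hde_exp_lip_aux {A B : ℝ} (hB : B ≤ 0) (h : A ≤ B) :
    Real.exp B - Real.exp A ≤ B - A := by
  have hAB : Real.exp A = Real.exp B * Real.exp (A - B) := by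
    rw [← Real.exp_add]; ring_nf
  have h1 : Real.exp B - Real.exp A = Real.exp B * (1 - Real.exp (A - B)) := by
    rw [hAB]; ring
  rw [h1]
  calc Real.exp B * (1 - Real.exp (A - B)) ≤ 1 * (B - A) := by
        apply mul_le_mul (Real.exp_le_one_iff.2 hB)
          (by linarith [Real.add_one_le_exp (A - B)])
          (by linarith [Real.exp_le_one_iff.2 (show A - B ≤ 0 by linarith)]) zero_le_one
    _ = B - A := one_mul _

lemma hde_exp_lip {A B : ℝ} (hA : A ≤ 0) (hB : B ≤ 0) :
    |Real.exp A - Real.exp B| ≤ |A - B| := by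
  rcases le_total A B with h | h
  · rw [abs_sub_comm, abs_of_nonneg (by linarith [Real.exp_le_exp.2 h, hde_exp_lip_aux hB h]),
      abs_sub_comm, abs_of_nonneg (by linarith)]
    exact hde_exp_lip_aux hB h
  · rw [abs_of_nonneg (by linarith [Real.exp_le_exp.2 h]), abs_of_nonneg (by linarith)]
    exact hde_exp_lip_aux hA h

lemma hde_deriv_b (σ α : ℝ) (b : ℝ → ℝ) (hb0 : b 0 = 0)
    (hbnn : ∀ s, 0 ≤ s → 0 ≤ b s) (hσ : 0 ≤ σ) (hα : 0 ≤ α)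
    (hode : ∀ s, HasDerivAt b (1 - σ ^ 2 / 2 * (b s) ^ 2 - α * b s) s) :
    ∀ s, 0 ≤ s → 0 < deriv b s ∧ deriv b s ≤ 1 := by
  have hbd : Differentiable ℝ b := fun s => (hode s).differentiableAt
  have hbc : Continuous b := hbd.continuous
  set c : ℝ → ℝ := fun s => σ ^ 2 * b s + α with hc
  have hcc : Continuous c := (continuous_const.mul hbc).add continuous_const
  set C : ℝ → ℝ := fun s => ∫ u in (0:ℝ)..s, c u with hCdef
  have hC : ∀ s, HasDerivAt C (c s) s := fun s => (hcc.integral_hasStrictDerivAt 0 s).hasDerivAt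
  set g : ℝ → ℝ := fun s => 1 - σ ^ 2 / 2 * (b s) ^ 2 - α * b s with hg
  have hgd : ∀ s, HasDerivAt g (-(c s * g s)) s := by
    intro s
    have h1 : HasDerivAt (fun x => (b x) ^ 2) (2 * b s ^ 1 * (g s)) s := (hode s).pow 2
    have h2 : HasDerivAt g (0 - σ ^ 2 / 2 * (2 * b s ^ 1 * g s) - α * (g s)) s :=
      ((hasDerivAt_const s (1:ℝ)).sub (h1.const_mul (σ ^ 2 / 2))).sub ((hode s).const_mul α)
    convert h2 using 1
    simp only [hc]; ring
  have hE : ∀ s, HasDerivAt (fun x => Real.exp (C x)) (Real.exp (C s) * c s) s :=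
    fun s => (hC s).exp
  have hmul : ∀ s, HasDerivAt (fun x => g x * Real.exp (C x)) 0 s := by
    intro s
    have h : HasDerivAt (fun x => g x * Real.exp (C x)) _ s := (hgd s).mul (hE s)
    convert h using 1
    ring
  have hconst : ∀ s, g s * Real.exp (C s) = 1 := by
    intro s
    have h := is_const_of_deriv_eq_zero (𝕜 := ℝ)
      (f := fun x => g x * Real.exp (C x))
      (fun x => (hmul x).differentiableAt) (fun x => (hmul x).deriv) s 0
    have h0 : g 0 * Real.exp (C 0) = 1 := by
      simp [hg, hCdef, hb0]
    rw [h, h0]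
  have hgval : ∀ s, g s = Real.exp (-(C s)) := by
    intro s
    have h := hconst s
    rw [Real.exp_neg]
    field_simp
    linarith [h]
  intro s hs
  have hderiv : deriv b s = g s := (hode s).deriv
  constructor
  · rw [hderiv, hgval]; exact Real.exp_pos _
  · rw [hderiv, hgval]
    apply Real.exp_le_one_iff.2
    simp only [neg_nonpos]
    apply intervalIntegral.integral_nonneg hs
    intro u hu
    have := hbnn u hu.1
    simp only [hc]
    positivity

noncomputable def hdePhi (α lbar βC l0 : ℝ) (b G : ℝ → ℝ) (t : ℝ) : ℝ :=
  1 - Real.exp (-(α * lbar) * (∫ r in (0:ℝ)..t, b (t - r))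
      - βC * (∫ r in (0:ℝ)..t, G r * deriv b (t - r)) - b t * l0)

def hdeGood (T : ℝ) : Set C(Set.Icc (0:ℝ) T, ℝ) := {f | ∀ x, f x ∈ Set.Icc (0:ℝ) 1}

noncomputable def hdeMap (α lbar βC l0 T : ℝ) (hT : (0:ℝ) ≤ T) (b : ℝ → ℝ)
    (hcont : ∀ f : C(Set.Icc (0:ℝ) T, ℝ),
      Continuous (hdePhi α lbar βC l0 b (Set.IccExtend hT ⇑f)))
    (hmem : ∀ f : C(Set.Icc (0:ℝ) T, ℝ), f ∈ hdeGood T →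
      ∀ x : Set.Icc (0:ℝ) T, hdePhi α lbar βC l0 b (Set.IccExtend hT ⇑f) ↑x ∈ Set.Icc (0:ℝ) 1) :
    hdeGood T → hdeGood T :=
  fun f => ⟨⟨fun x => hdePhi α lbar βC l0 b (Set.IccExtend hT ⇑f.1) ↑x,
    (hcont f.1).comp continuous_subtype_val⟩, fun x => hmem f.1 f.2 x⟩

lemma hdeExpoNonpos (α lbar βC l0 : ℝ) (hαl : 0 ≤ α * lbar) (hβC : 0 ≤ βC) (hl0 : 0 ≤ l0)
    (b : ℝ → ℝ) (hbnn : ∀ s, 0 ≤ s → 0 ≤ b s)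
    (hk0 : ∀ s, 0 ≤ s → 0 ≤ deriv b s)
    (G : ℝ → ℝ) (hG : ∀ r, 0 ≤ G r) (t : ℝ) (ht : 0 ≤ t) :
    -(α * lbar) * (∫ r in (0:ℝ)..t, b (t - r))
      - βC * (∫ r in (0:ℝ)..t, G r * deriv b (t - r)) - b t * l0 ≤ 0 := by
  have I1 : 0 ≤ ∫ r in (0:ℝ)..t, b (t - r) :=
    intervalIntegral.integral_nonneg ht (fun u hu => hbnn _ (by linarith [hu.2]))
  have I2 : 0 ≤ ∫ r in (0:ℝ)..t, G r * deriv b (t - r) :=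
    intervalIntegral.integral_nonneg ht
      (fun u hu => mul_nonneg (hG u) (hk0 _ (by linarith [hu.2])))
  nlinarith [mul_nonneg hαl I1, mul_nonneg hβC I2, mul_nonneg (hbnn t ht) hl0]

lemma hdeStep (α lbar βC l0 : ℝ) (hαl : 0 ≤ α * lbar) (hβC : 0 ≤ βC) (hl0 : 0 ≤ l0)
    (b : ℝ → ℝ) (hbc : Continuous b) (hkc : Continuous (deriv b))
    (hbnn : ∀ s, 0 ≤ s → 0 ≤ b s) (hk01 : ∀ s, 0 ≤ s → 0 ≤ deriv b s ∧ deriv b s ≤ 1)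
    (G H : ℝ → ℝ) (hGc : Continuous G) (hHc : Continuous H)
    (hG : ∀ r, G r ∈ Set.Icc (0:ℝ) 1) (hH : ∀ r, H r ∈ Set.Icc (0:ℝ) 1)
    (t : ℝ) (ht : 0 ≤ t) (n : ℕ) (M : ℝ) (hM : 0 ≤ M)
    (hind : ∀ r ∈ Set.Icc (0:ℝ) t, |G r - H r| ≤ (βC * r) ^ n / n.factorial * M) :
    |hdePhi α lbar βC l0 b G t - hdePhi α lbar βC l0 b H t|
      ≤ (βC * t) ^ (n + 1) / (n + 1).factorial * M := by
  have hk0 : ∀ s, 0 ≤ s → 0 ≤ deriv b s := fun s hs => (hk01 s hs).1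
  set k := deriv b with hk
  set eG : ℝ := -(α * lbar) * (∫ r in (0:ℝ)..t, b (t - r))
      - βC * (∫ r in (0:ℝ)..t, G r * k (t - r)) - b t * l0 with heG
  set eH : ℝ := -(α * lbar) * (∫ r in (0:ℝ)..t, b (t - r))
      - βC * (∫ r in (0:ℝ)..t, H r * k (t - r)) - b t * l0 with heH
  have hG0 : ∀ r, 0 ≤ G r := fun r => (hG r).1
  have hH0 : ∀ r, 0 ≤ H r := fun r => (hH r).1
  have heGn : eG ≤ 0 := hdeExpoNonpos α lbar βC l0 hαl hβC hl0 b hbnn hk0 G hG0 t ht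
  have heHn : eH ≤ 0 := hdeExpoNonpos α lbar βC l0 hαl hβC hl0 b hbnn hk0 H hH0 t ht
  have h1 : |hdePhi α lbar βC l0 b G t - hdePhi α lbar βC l0 b H t|
      = |Real.exp eG - Real.exp eH| := by
    rw [hdePhi, hdePhi, ← heG, ← heH]
    rw [show (1 - Real.exp eG) - (1 - Real.exp eH) = -(Real.exp eG - Real.exp eH) by ring,
      abs_neg]
  have hktc : Continuous fun r => k (t - r) := hkc.comp (continuous_const.sub continuous_id)
  have hGkint : IntervalIntegrable (fun r => G r * k (t - r)) volume 0 t :=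
    (hGc.mul hktc).intervalIntegrable _ _
  have hHkint : IntervalIntegrable (fun r => H r * k (t - r)) volume 0 t :=
    (hHc.mul hktc).intervalIntegrable _ _
  have h2 : eG - eH = -βC * ∫ r in (0:ℝ)..t, (G r - H r) * k (t - r) := by
    rw [heG, heH]
    have : ∫ r in (0:ℝ)..t, (G r - H r) * k (t - r)
        = (∫ r in (0:ℝ)..t, G r * k (t - r)) - ∫ r in (0:ℝ)..t, H r * k (t - r) := by
      rw [← intervalIntegral.integral_sub hGkint hHkint]
      congr 1; funext r; ring
    rw [this]; ring
  have h3 : |eG - eH| ≤ βC * ∫ r in (0:ℝ)..t, (βC * r) ^ n / n.factorial * M := by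
    rw [h2, abs_mul, abs_neg, abs_of_nonneg hβC]
    apply mul_le_mul_of_nonneg_left _ hβC
    calc |∫ r in (0:ℝ)..t, (G r - H r) * k (t - r)|
        ≤ ∫ r in (0:ℝ)..t, |(G r - H r) * k (t - r)| :=
          intervalIntegral.abs_integral_le_integral_abs ht
      _ ≤ ∫ r in (0:ℝ)..t, (βC * r) ^ n / n.factorial * M := by
          apply intervalIntegral.integral_mono_on ht
          · exact ((hGc.sub hHc).mul hktc).abs.intervalIntegrable _ _
          · exact ((((continuous_const.mul continuous_id).pow n).div_const _).mul
              continuous_const).intervalIntegrable _ _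
          · intro r hr
            rw [abs_mul]
            have hkr : 0 ≤ k (t - r) := hk0 _ (by linarith [hr.2])
            have hkr1 : k (t - r) ≤ 1 := (hk01 _ (by linarith [hr.2])).2
            have hb0 : 0 ≤ (βC * r) ^ n / n.factorial * M :=
              mul_nonneg (div_nonneg (pow_nonneg (mul_nonneg hβC hr.1) n) (by positivity)) hM
            calc |G r - H r| * |k (t - r)|
                ≤ ((βC * r) ^ n / n.factorial * M) * 1 := by
                  apply mul_le_mul (hind r hr) _ (abs_nonneg _) hb0
                  rw [abs_of_nonneg hkr]; exact hkr1
              _ = (βC * r) ^ n / n.factorial * M := mul_one _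
  have h4 : ∫ r in (0:ℝ)..t, (βC * r) ^ n / n.factorial * M
      = βC ^ n / n.factorial * M * (t ^ (n + 1) / (n + 1)) := by
    have he : (fun r => (βC * r) ^ n / n.factorial * M)
        = fun r => (βC ^ n / n.factorial * M) * r ^ n := by
      funext r; rw [mul_pow]; ring
    rw [he, intervalIntegral.integral_const_mul, integral_pow]
    norm_num
  have hfac : ((n.factorial : ℝ)) ≠ 0 := by exact_mod_cast Nat.factorial_ne_zero n
  calc |hdePhi α lbar βC l0 b G t - hdePhi α lbar βC l0 b H t|
      = |Real.exp eG - Real.exp eH| := h1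
    _ ≤ |eG - eH| := hde_exp_lip heGn heHn
    _ ≤ βC * ∫ r in (0:ℝ)..t, (βC * r) ^ n / n.factorial * M := h3
    _ = (βC * t) ^ (n + 1) / (n + 1).factorial * M := by
        rw [h4, mul_pow, Nat.factorial_succ]
        push_cast
        field_simp
        ring
/-- in the homogeneous case the limiting default rate `F` satisfies
`F(t) = 1 - exp(-αλ̄∫_0^t b(t-r)dr - β^C∫_0^t F(r) b'(t-r)dr - b(t)λ₀)`,
and this integral equation has a unique continuous `[0,1]`-valued solution on `[0,T]`,
where `b` solves the Riccati ODE `b' = 1 - (σ²/2)b² - αb`, `b(0)=0`. -/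
theorem homogeneous_default_rate_exists_unique
    (α lbar σ βC l0 T : ℝ) (hα : 0 ≤ α) (hlbar : 0 ≤ lbar) (hσ : 0 ≤ σ)
    (hβC : 0 ≤ βC) (hl0 : 0 ≤ l0) (hT : 0 < T)
    (b : ℝ → ℝ) (hb0 : b 0 = 0) (hbpos : ∀ s > (0:ℝ), 0 < b s)
    (hode : ∀ s, HasDerivAt b (1 - σ ^ 2 / 2 * (b s) ^ 2 - α * b s) s) :
    ∃ F : ℝ → ℝ,
      (ContinuousOn F (Set.Icc 0 T) ∧ (∀ t ∈ Set.Icc (0:ℝ) T, F t ∈ Set.Icc (0:ℝ) 1) ∧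
        (∀ t ∈ Set.Icc (0:ℝ) T,
          F t = 1 - Real.exp (-(α * lbar) * (∫ r in (0:ℝ)..t, b (t - r))
            - βC * (∫ r in (0:ℝ)..t, F r * deriv b (t - r)) - b t * l0))) ∧
      ∀ F' : ℝ → ℝ,
        (ContinuousOn F' (Set.Icc 0 T) ∧ (∀ t ∈ Set.Icc (0:ℝ) T, F' t ∈ Set.Icc (0:ℝ) 1) ∧
          (∀ t ∈ Set.Icc (0:ℝ) T,
            F' t = 1 - Real.exp (-(α * lbar) * (∫ r in (0:ℝ)..t, b (t - r))
              - βC * (∫ r in (0:ℝ)..t, F' r * deriv b (t - r)) - b t * l0))) →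
        Set.EqOn F F' (Set.Icc 0 T) := by
  have hT' : (0:ℝ) ≤ T := hT.le
  have hbd : Differentiable ℝ b := fun s => (hode s).differentiableAt
  have hbc : Continuous b := hbd.continuous
  have hbnn : ∀ s, 0 ≤ s → 0 ≤ b s := by
    intro s hs
    rcases hs.eq_or_lt with h | h
    · simp [← h, hb0]
    · exact (hbpos s h).le
  have hk01 : ∀ s, 0 ≤ s → 0 ≤ deriv b s ∧ deriv b s ≤ 1 := by
    intro s hs
    obtain ⟨h1, h2⟩ := hde_deriv_b σ α b hb0 hbnn hσ hα hode s hs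
    exact ⟨h1.le, h2⟩
  have hαl : 0 ≤ α * lbar := mul_nonneg hα hlbar
  have hkeq : deriv b = fun s => 1 - σ ^ 2 / 2 * (b s) ^ 2 - α * b s :=
    funext fun s => (hode s).deriv
  have hkc : Continuous (deriv b) := by
    rw [hkeq]
    exact (continuous_const.sub (continuous_const.mul (hbc.pow 2))).sub (continuous_const.mul hbc)
  have hcont : ∀ f : C(Set.Icc (0:ℝ) T, ℝ),
      Continuous (hdePhi α lbar βC l0 b (Set.IccExtend hT' ⇑f)) := by
    intro f
    have hfc : Continuous (Set.IccExtend hT' ⇑f) := f.continuous.Icc_extend'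
    have h1 : Continuous fun t : ℝ => ∫ r in (0:ℝ)..t, b (t - r) := by
      apply intervalIntegral.continuous_parametric_intervalIntegral_of_continuous
        (f := fun (t r : ℝ) => b (t - r)) ?_ continuous_id
      exact hbc.comp (continuous_fst.sub continuous_snd)
    have h2 : Continuous fun t : ℝ => ∫ r in (0:ℝ)..t, Set.IccExtend hT' ⇑f r * deriv b (t - r) := by
      apply intervalIntegral.continuous_parametric_intervalIntegral_of_continuous
        (f := fun (t r : ℝ) => Set.IccExtend hT' ⇑f r * deriv b (t - r)) ?_ continuous_id
      exact (hfc.comp continuous_snd).mul (hkc.comp (continuous_fst.sub continuous_snd))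
    unfold hdePhi
    exact continuous_const.sub (Real.continuous_exp.comp
      (((continuous_const.mul h1).sub (continuous_const.mul h2)).sub
        (hbc.mul continuous_const)))
  have hextmem : ∀ f : C(Set.Icc (0:ℝ) T, ℝ), f ∈ hdeGood T →
      ∀ r, Set.IccExtend hT' ⇑f r ∈ Set.Icc (0:ℝ) 1 := fun f hf r => hf _
  have hmem : ∀ f : C(Set.Icc (0:ℝ) T, ℝ), f ∈ hdeGood T →
      ∀ x : Set.Icc (0:ℝ) T,
        hdePhi α lbar βC l0 b (Set.IccExtend hT' ⇑f) ↑x ∈ Set.Icc (0:ℝ) 1 := by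
    intro f hf x
    have he := hdeExpoNonpos α lbar βC l0 hαl hβC hl0 b hbnn (fun s hs => (hk01 s hs).1)
      (Set.IccExtend hT' ⇑f) (fun r => (hextmem f hf r).1) x.1 x.2.1
    constructor
    · simp only [hdePhi]
      linarith [Real.exp_le_one_iff.2 he]
    · simp only [hdePhi]
      linarith [Real.exp_pos (-(α * lbar) * (∫ r in (0:ℝ)..(x:ℝ), b (↑x - r))
        - βC * (∫ r in (0:ℝ)..(x:ℝ), Set.IccExtend hT' ⇑f r * deriv b (↑x - r)) - b ↑x * l0)]
  set Φ : ↥(hdeGood T) → ↥(hdeGood T) := hdeMap α lbar βC l0 T hT' b hcont hmem with hΦ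
  have hclosed : IsClosed (hdeGood T) := by
    have h : hdeGood T = ⋂ x, (fun f : C(Set.Icc (0:ℝ) T, ℝ) => f x) ⁻¹' Set.Icc (0:ℝ) 1 := by
      ext f; simp [hdeGood, Set.mem_iInter]
    rw [h]
    exact isClosed_iInter fun x => isClosed_Icc.preimage (continuous_eval_const x)
  haveI : CompleteSpace ↥(hdeGood T) := hclosed.completeSpace_coe
  haveI : Nonempty ↥(hdeGood T) := ⟨⟨ContinuousMap.const _ 0, fun x => by
    simp [Set.mem_Icc]⟩⟩
  have happly : ∀ (u : ↥(hdeGood T)) (x : Set.Icc (0:ℝ) T),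
      (↑(Φ u) : C(Set.Icc (0:ℝ) T, ℝ)) x
        = hdePhi α lbar βC l0 b (Set.IccExtend hT' ⇑(↑u : C(Set.Icc (0:ℝ) T, ℝ))) ↑x :=
    fun u x => rfl
  have hExt : ∀ (u : ↥(hdeGood T)) (t : ℝ) (ht : t ∈ Set.Icc (0:ℝ) T),
      Set.IccExtend hT' ⇑(↑u : C(Set.Icc (0:ℝ) T, ℝ)) t = (↑u : C(Set.Icc (0:ℝ) T, ℝ)) ⟨t, ht⟩ :=
    fun u t ht => Set.IccExtend_of_mem hT' _ ht
  have key : ∀ (n : ℕ) (u v : ↥(hdeGood T)) (t : ℝ), t ∈ Set.Icc (0:ℝ) T →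
      |Set.IccExtend hT' ⇑(↑(Φ^[n] u) : C(Set.Icc (0:ℝ) T, ℝ)) t
        - Set.IccExtend hT' ⇑(↑(Φ^[n] v) : C(Set.Icc (0:ℝ) T, ℝ)) t|
        ≤ (βC * t) ^ n / n.factorial * dist u v := by
    intro n
    induction n with
    | zero =>
      intro u v t ht
      simp only [Function.iterate_zero, id_eq, pow_zero, Nat.factorial_zero, Nat.cast_one,
        div_one, one_mul]
      rw [hExt u t ht, hExt v t ht]
      calc |(↑u : C(Set.Icc (0:ℝ) T, ℝ)) ⟨t, ht⟩ - (↑v : C(Set.Icc (0:ℝ) T, ℝ)) ⟨t, ht⟩|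
          = dist ((↑u : C(Set.Icc (0:ℝ) T, ℝ)) ⟨t, ht⟩) ((↑v : C(Set.Icc (0:ℝ) T, ℝ)) ⟨t, ht⟩) :=
            (Real.dist_eq _ _).symm
        _ ≤ dist (↑u : C(Set.Icc (0:ℝ) T, ℝ)) (↑v : C(Set.Icc (0:ℝ) T, ℝ)) :=
            ContinuousMap.dist_apply_le_dist _
        _ = dist u v := rfl
    | succ n ih =>
      intro u v t ht
      rw [Function.iterate_succ_apply' Φ n u, Function.iterate_succ_apply' Φ n v,
        hExt _ t ht, hExt _ t ht, happly, happly]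
      apply hdeStep α lbar βC l0 hαl hβC hl0 b hbc hkc hbnn hk01 _ _
        ((↑(Φ^[n] u) : C(Set.Icc (0:ℝ) T, ℝ)).continuous.Icc_extend')
        ((↑(Φ^[n] v) : C(Set.Icc (0:ℝ) T, ℝ)).continuous.Icc_extend')
        (hextmem _ (Φ^[n] u).2) (hextmem _ (Φ^[n] v).2)
        t ht.1 n (dist u v) dist_nonneg
      intro r hr
      exact ih u v r ⟨hr.1, le_trans hr.2 ht.2⟩
  obtain ⟨n, hn⟩ : ∃ n : ℕ, (βC * T) ^ n / n.factorial < 1 := by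
    have h := FloorSemiring.tendsto_pow_div_factorial_atTop (K := ℝ) (βC * T)
    exact (h.eventually (gt_mem_nhds one_pos)).exists
  have hKnn : 0 ≤ (βC * T) ^ n / n.factorial := by positivity
  set K : NNReal := ⟨(βC * T) ^ n / n.factorial, hKnn⟩ with hK
  have hcontr : ContractingWith K (Φ^[n]) := by
    constructor
    · exact_mod_cast hn
    · apply LipschitzWith.of_dist_le_mul
      intro u v
      rw [Subtype.dist_eq (Φ^[n] u) (Φ^[n] v)]
      refine (ContinuousMap.dist_le (mul_nonneg hKnn dist_nonneg)).2 ?_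
      intro x
      rw [Real.dist_eq]
      have h := key n u v x.1 x.2
      rw [hExt _ _ x.2, hExt _ _ x.2] at h
      simp only [Subtype.coe_eta] at h
      refine le_trans h ?_
      have hx : (βC * x.1) ^ n ≤ (βC * T) ^ n :=
        pow_le_pow_left₀ (mul_nonneg hβC x.2.1) (mul_le_mul_of_nonneg_left x.2.2 hβC) n
      have hfin : (βC * x.1) ^ n / n.factorial * dist u v
          ≤ (βC * T) ^ n / n.factorial * dist u v := by
        gcongr
      exact hfin
  set Fc : ↥(hdeGood T) := ContractingWith.fixedPoint (Φ^[n]) hcontr with hFc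
  have hfixn : Function.IsFixedPt (Φ^[n]) Fc := hcontr.fixedPoint_isFixedPt
  have hfix : Φ Fc = Fc := by
    have h1 : Function.IsFixedPt (Φ^[n]) (Φ Fc) := by
      show Φ^[n] (Φ Fc) = Φ Fc
      rw [← Function.iterate_succ_apply, Function.iterate_succ_apply', hfixn]
    exact hcontr.fixedPoint_unique' h1 hfixn
  refine ⟨Set.IccExtend hT' ⇑(↑Fc : C(Set.Icc (0:ℝ) T, ℝ)), ⟨?_, ?_, ?_⟩, ?_⟩
  · exact ((↑Fc : C(Set.Icc (0:ℝ) T, ℝ)).continuous.Icc_extend').continuousOn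
  · intro t ht
    rw [hExt Fc t ht]
    exact Fc.2 _
  · intro t ht
    conv_lhs => rw [hExt Fc t ht, ← hfix]
    rw [happly]
    rfl
  · rintro F' ⟨hc', hmem', heq'⟩
    set G' : C(Set.Icc (0:ℝ) T, ℝ) := ⟨(Set.Icc (0:ℝ) T).restrict F', hc'.restrict⟩ with hG'
    have hG'mem : G' ∈ hdeGood T := fun x => hmem' x.1 x.2
    have hfix' : Φ (⟨G', hG'mem⟩ : ↥(hdeGood T)) = ⟨G', hG'mem⟩ := by
      apply Subtype.ext
      apply ContinuousMap.ext
      intro x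
      show hdePhi α lbar βC l0 b (Set.IccExtend hT' ⇑G') ↑x = G' x
      have hcong : (∫ r in (0:ℝ)..(x:ℝ), Set.IccExtend hT' ⇑G' r * deriv b (↑x - r))
          = ∫ r in (0:ℝ)..(x:ℝ), F' r * deriv b (↑x - r) := by
        apply intervalIntegral.integral_congr
        intro r hr
        rw [Set.uIcc_of_le x.2.1] at hr
        have hrT : r ∈ Set.Icc (0:ℝ) T := ⟨hr.1, le_trans hr.2 x.2.2⟩
        show Set.IccExtend hT' (⇑G') r * deriv b (↑x - r) = F' r * deriv b (↑x - r)
        rw [Set.IccExtend_of_mem hT' _ hrT]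
        rfl
      simp only [hdePhi]
      rw [hcong, ← heq' x.1 x.2]
      rfl
    have hfixn' : Function.IsFixedPt (Φ^[n]) ⟨G', hG'mem⟩ :=
      Function.IsFixedPt.iterate hfix' n
    have hFG : Fc = ⟨G', hG'mem⟩ := hcontr.fixedPoint_unique' hfixn hfixn'
    intro t ht
    rw [hExt Fc t ht, hFG]
    rfl
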